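/- arXiv:2402.10470 — 4 statements merged into one kernel-verified Lean document; each statement's English description precedes it below -/
import Mathlib

section
/- Let x_1,...,x_N ∈ ℝ^d and z ∈ ℝ^d. Suppose there exist constants c, C, K > 0 with c·d ≤ ‖x_n‖^2 ≤ C·d for all n, ‖z‖^2 ≤ C·d, and |⟨x_n, x_k⟩| ≤ K·d/N for all n ≠ k. Then ∑_{n=1}^N ⟨x_n, z⟩^2 ≤ C'·d^2 for a constant C' depending only on c, C, K (in particular, independent of N and d). -/
open Real

/-- Upper bound on the sum of squared inner products with nearly orthogonal vectors:
under `c·d ≤ ‖x_n‖² ≤ C·d`, `‖z‖² ≤ C·d`, `|⟨x_n,x_k⟩| ≤ K·d/N` for `n ≠ k`, one has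
`∑ ⟨x_n, z⟩² ≤ C'·d²` for a constant `C'` depending only on `c, C, K`. -/
theorem stmt_7 (c C K : ℝ) (hc : 0 < c) (hC : 0 < C) (hK : 0 < K) :
    ∃ C' : ℝ, 0 < C' ∧
      ∀ (d N : ℕ), 0 < d → 0 < N →
        ∀ (x : Fin N → EuclideanSpace ℝ (Fin d)) (z : EuclideanSpace ℝ (Fin d)),
          (∀ n, c * d ≤ ‖x n‖ ^ 2) → (∀ n, ‖x n‖ ^ 2 ≤ C * d) → ‖z‖ ^ 2 ≤ C * d →
          (∀ n k, n ≠ k → |(inner ℝ (x n) (x k) : ℝ)| ≤ K * d / N) →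
          ∑ n, (inner ℝ (x n) z : ℝ) ^ 2 ≤ C' * (d : ℝ) ^ 2 := by
  refine ⟨C * (C + K), by positivity, ?_⟩
  intro d N hd hN x z hlow hup hz hortho
  set a : Fin N → ℝ := fun n => (inner ℝ (x n) z : ℝ) with ha
  set T : ℝ := ∑ n, a n ^ 2 with hT
  have hT0 : 0 ≤ T := Finset.sum_nonneg fun n _ => sq_nonneg _
  set v : EuclideanSpace ℝ (Fin d) := ∑ n, a n • x n with hv
  have hdpos : (0:ℝ) < d := by exact_mod_cast hd
  have hNpos : (0:ℝ) < N := by exact_mod_cast hN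
  -- ⟪v, z⟫ = T
  have hvz : (inner ℝ v z : ℝ) = T := by
    rw [hv, sum_inner, hT]
    exact Finset.sum_congr rfl fun n _ => by rw [real_inner_smul_left, sq]
  -- bound ‖v‖^2
  have hvnorm : ‖v‖ ^ 2 ≤ (C + K) * d * T := by
    have : ‖v‖ ^ 2 = ∑ n, ∑ k, a n * a k * (inner ℝ (x n) (x k) : ℝ) := by
      rw [← real_inner_self_eq_norm_sq, hv, sum_inner]
      refine Finset.sum_congr rfl fun n _ => ?_
      rw [inner_sum]
      refine Finset.sum_congr rfl fun k _ => ?_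
      rw [real_inner_smul_left, real_inner_smul_right]; ring
    rw [this]
    have key : ∀ n ∈ Finset.univ, ∑ k, a n * a k * (inner ℝ (x n) (x k) : ℝ) ≤
        C * d * a n ^ 2 + ∑ k, |a n| * |a k| * (K * d / N) - |a n| * |a n| * (K * d / N) := by
      intro n _
      have hsplit : ∑ k, a n * a k * (inner ℝ (x n) (x k) : ℝ) =
          a n ^ 2 * ‖x n‖ ^ 2 + ∑ k ∈ Finset.univ.erase n, a n * a k * (inner ℝ (x n) (x k) : ℝ) := by
        rw [← Finset.add_sum_erase _ _ (Finset.mem_univ n), real_inner_self_eq_norm_sq]; ring_nf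
      rw [hsplit]
      have h1 : a n ^ 2 * ‖x n‖ ^ 2 ≤ C * d * a n ^ 2 := by
        have := hup n
        nlinarith [sq_nonneg (a n)]
      have h2 : ∑ k ∈ Finset.univ.erase n, a n * a k * (inner ℝ (x n) (x k) : ℝ) ≤
          ∑ k ∈ Finset.univ.erase n, |a n| * |a k| * (K * d / N) := by
        refine Finset.sum_le_sum fun k hk => ?_
        have hne : n ≠ k := (Finset.ne_of_mem_erase hk).symm
        calc a n * a k * (inner ℝ (x n) (x k) : ℝ) ≤ |a n * a k * (inner ℝ (x n) (x k) : ℝ)| := le_abs_self _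
          _ = |a n| * |a k| * |(inner ℝ (x n) (x k) : ℝ)| := by rw [abs_mul, abs_mul]
          _ ≤ |a n| * |a k| * (K * d / N) := by
              exact mul_le_mul_of_nonneg_left (hortho n k hne) (by positivity)
      have h3 : ∑ k ∈ Finset.univ.erase n, |a n| * |a k| * (K * d / N) =
          (∑ k, |a n| * |a k| * (K * d / N)) - |a n| * |a n| * (K * d / N) := by
        rw [← Finset.add_sum_erase _ _ (Finset.mem_univ n)]; ring
      linarith
    calc ∑ n, ∑ k, a n * a k * (inner ℝ (x n) (x k) : ℝ)
        ≤ ∑ n, (C * d * a n ^ 2 + ∑ k, |a n| * |a k| * (K * d / N) - |a n| * |a n| * (K * d / N)) :=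
          Finset.sum_le_sum key
      _ ≤ ∑ n, (C * d * a n ^ 2 + ∑ k, |a n| * |a k| * (K * d / N)) := by
          refine Finset.sum_le_sum fun n _ => ?_
          have : 0 ≤ |a n| * |a n| * (K * d / N) := by positivity
          linarith
      _ = C * d * T + (K * d / N) * (∑ n, |a n|) ^ 2 := by
          have e1 : ∑ n, C * (d:ℝ) * a n ^ 2 = C * d * T := by rw [hT, Finset.mul_sum]
          have e2 : ∑ n, ∑ k, |a n| * |a k| * (K * (d:ℝ) / N) =
              (K * (d:ℝ) / N) * (∑ n, |a n|) ^ 2 := by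
            rw [sq, Finset.sum_mul_sum, Finset.mul_sum]
            refine Finset.sum_congr rfl fun n _ => ?_
            rw [Finset.mul_sum]
            exact Finset.sum_congr rfl fun k _ => by ring
          rw [Finset.sum_add_distrib, e1, e2]
      _ ≤ C * d * T + (K * d / N) * (N * T) := by
          have hcs : (∑ n, |a n|) ^ 2 ≤ (N : ℝ) * T := by
            have := sq_sum_le_card_mul_sum_sq (s := (Finset.univ : Finset (Fin N)))
              (f := fun n => |a n|)
            simpa [hT, sq_abs] using this
          have : 0 ≤ K * d / N := by positivity
          nlinarith
      _ = (C + K) * d * T := by field_simp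
  -- conclude
  have hTle : T ≤ ‖v‖ * ‖z‖ := by
    rw [← hvz]; exact real_inner_le_norm v z
  have hsq : T ^ 2 ≤ (C + K) * d * T * (C * d) := by
    calc T ^ 2 ≤ (‖v‖ * ‖z‖) ^ 2 := by
          have h0 : 0 ≤ ‖v‖ * ‖z‖ := by positivity
          nlinarith
      _ = ‖v‖ ^ 2 * ‖z‖ ^ 2 := by ring
      _ ≤ (C + K) * d * T * (C * d) := by
          have h1 : 0 ≤ ‖z‖ ^ 2 := sq_nonneg _
          have h2 : 0 ≤ ‖v‖ ^ 2 := sq_nonneg _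
          nlinarith
  rcases eq_or_lt_of_le hT0 with h | h
  · rw [← h]; positivity
  · have : T ≤ C * (C + K) * d ^ 2 := by nlinarith
    exact this
end

section
/- Let x_1,...,x_N ∈ ℝ^d with R_min ≤ ‖x_n‖ ≤ R_max for all n and max_{n≠k}|⟨x_n,x_k⟩| ≤ p_max, and let f^bdy(z) = ∑_{k=1}^N λ_k y_k ⟨x_k, z⟩ with y_k ∈ {±1} and λ_k ∈ (1/(2R_max^2), 3/(2γ^2 R_min^2)) for a fixed γ ∈ (0,1). If γ^3 R_min^4 / (3N R_max^2) ≥ p_max, then for every n, sgn(f^bdy(x_n)) = y_n; in fact y_n f^bdy(x_n) ≥ (1−γ)R_min^2/(2R_max^2) > 0. -/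
open Real

/-- Under near orthogonality `γ³R_min⁴/(3N R_max²) ≥ p_max`, the linear boundary
`f^bdy(z) = ∑ λ_k y_k ⟨x_k, z⟩` classifies every training sample correctly:
`sgn(f^bdy(x_n)) = y_n`, indeed `y_n f^bdy(x_n) ≥ (1−γ)R_min²/(2R_max²) > 0`. -/
theorem stmt_10 (d N : ℕ) (hN : 0 < N)
    (x : Fin N → EuclideanSpace ℝ (Fin d)) (lam y : Fin N → ℝ)
    (Rmin Rmax pmax γ : ℝ) (hγ : 0 < γ ∧ γ < 1) (hRmin : 0 < Rmin)
    (hnorm : ∀ n, Rmin ≤ ‖x n‖ ∧ ‖x n‖ ≤ Rmax)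
    (hpmax : ∀ n k, n ≠ k → |(inner ℝ (x n) (x k) : ℝ)| ≤ pmax)
    (hy : ∀ n, y n = 1 ∨ y n = -1)
    (hlam : ∀ n, 1 / (2 * Rmax ^ 2) < lam n ∧ lam n < 3 / (2 * γ ^ 2 * Rmin ^ 2))
    (hcond : γ ^ 3 * Rmin ^ 4 / (3 * N * Rmax ^ 2) ≥ pmax) :
    ∀ n,
      Real.sign (∑ k, lam k * y k * (inner ℝ (x k) (x n) : ℝ)) = y n ∧
      (1 - γ) * Rmin ^ 2 / (2 * Rmax ^ 2) ≤
        y n * ∑ k, lam k * y k * (inner ℝ (x k) (x n) : ℝ) ∧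
      0 < (1 - γ) * Rmin ^ 2 / (2 * Rmax ^ 2) := by
  obtain ⟨hγ0, hγ1⟩ := hγ
  have n0 : Fin N := ⟨0, hN⟩
  have hRmax : 0 < Rmax := lt_of_lt_of_le hRmin ((hnorm n0).1.trans (hnorm n0).2)
  have hNpos : (0:ℝ) < N := Nat.cast_pos.mpr hN
  have hC : 0 < (1 - γ) * Rmin ^ 2 / (2 * Rmax ^ 2) := by
    apply div_pos (mul_pos (by linarith) (by positivity)) (by positivity)
  intro n
  set S : ℝ := ∑ k, lam k * y k * (inner ℝ (x k) (x n) : ℝ) with hS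
  have hyn2 : y n * y n = 1 := by rcases hy n with h | h <;> simp [h]
  have hsplit : y n * S = lam n * ‖x n‖ ^ 2 +
      ∑ k ∈ Finset.univ.erase n, y n * (lam k * y k * (inner ℝ (x k) (x n) : ℝ)) := by
    rw [hS, Finset.mul_sum, ← Finset.add_sum_erase _ _ (Finset.mem_univ n)]
    congr 1
    rw [real_inner_self_eq_norm_sq]
    linear_combination (lam n * ‖x n‖ ^ 2) * hyn2
  -- bound each cross term
  have hterm : ∀ k ∈ Finset.univ.erase n,
      |y n * (lam k * y k * (inner ℝ (x k) (x n) : ℝ))| ≤ γ * Rmin ^ 2 / (2 * N * Rmax ^ 2) := by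
    intro k hk
    have hkn : k ≠ n := Finset.ne_of_mem_erase hk
    have h1 : |(inner ℝ (x k) (x n) : ℝ)| ≤ pmax := hpmax k n hkn
    have hpn : 0 ≤ pmax := le_trans (abs_nonneg _) h1
    have hlk : 0 < lam k := lt_trans (by positivity) (hlam k).1
    have hlk2 : lam k ≤ 3 / (2 * γ ^ 2 * Rmin ^ 2) := le_of_lt (hlam k).2
    have hya : |y n| = 1 := by rcases hy n with h | h <;> simp [h]
    have hyb : |y k| = 1 := by rcases hy k with h | h <;> simp [h]
    have : |y n * (lam k * y k * (inner ℝ (x k) (x n) : ℝ))| = lam k * |(inner ℝ (x k) (x n) : ℝ)| := by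
      rw [abs_mul, abs_mul, abs_mul, hya, hyb, abs_of_pos hlk]; ring
    rw [this]
    have h2 : lam k * |(inner ℝ (x k) (x n) : ℝ)| ≤ (3 / (2 * γ ^ 2 * Rmin ^ 2)) * pmax :=
      mul_le_mul hlk2 h1 (abs_nonneg _) (by positivity)
    refine le_trans h2 ?_
    have h3 : (3 / (2 * γ ^ 2 * Rmin ^ 2)) * pmax ≤
        (3 / (2 * γ ^ 2 * Rmin ^ 2)) * (γ ^ 3 * Rmin ^ 4 / (3 * N * Rmax ^ 2)) :=
      mul_le_mul_of_nonneg_left hcond (by positivity)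
    refine le_trans h3 (le_of_eq ?_)
    field_simp
  have hcross : |∑ k ∈ Finset.univ.erase n, y n * (lam k * y k * (inner ℝ (x k) (x n) : ℝ))| ≤
      γ * Rmin ^ 2 / (2 * Rmax ^ 2) := by
    calc _ ≤ ∑ k ∈ Finset.univ.erase n, |y n * (lam k * y k * (inner ℝ (x k) (x n) : ℝ))| :=
          Finset.abs_sum_le_sum_abs _ _
      _ ≤ (Finset.univ.erase n).card * (γ * Rmin ^ 2 / (2 * N * Rmax ^ 2)) :=
          by simpa [nsmul_eq_mul] using Finset.sum_le_card_nsmul _ _ _ hterm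
      _ ≤ N * (γ * Rmin ^ 2 / (2 * N * Rmax ^ 2)) := by
          apply mul_le_mul_of_nonneg_right _ (by positivity)
          have hc : (Finset.univ.erase n).card ≤ N := le_trans Finset.card_erase_le (by simp)
          exact_mod_cast hc
      _ = γ * Rmin ^ 2 / (2 * Rmax ^ 2) := by field_simp
  have hmain : lam n * ‖x n‖ ^ 2 ≥ Rmin ^ 2 / (2 * Rmax ^ 2) := by
    have h1 : 1 / (2 * Rmax ^ 2) ≤ lam n := le_of_lt (hlam n).1
    have h2 : Rmin ≤ ‖x n‖ := (hnorm n).1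
    have h3 : Rmin ^ 2 ≤ ‖x n‖ ^ 2 := by nlinarith
    have h4 : (0:ℝ) < 1 / (2 * Rmax ^ 2) := by positivity
    calc Rmin ^ 2 / (2 * Rmax ^ 2) = (1 / (2 * Rmax ^ 2)) * Rmin ^ 2 := by ring
      _ ≤ lam n * ‖x n‖ ^ 2 := mul_le_mul h1 h3 (by positivity) (le_trans h4.le h1)
  have hkey : (1 - γ) * Rmin ^ 2 / (2 * Rmax ^ 2) ≤ y n * S := by
    have := abs_le.mp hcross
    rw [hsplit]
    have : -(γ * Rmin ^ 2 / (2 * Rmax ^ 2)) ≤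
        ∑ k ∈ Finset.univ.erase n, y n * (lam k * y k * (inner ℝ (x k) (x n) : ℝ)) := this.1
    have heq : (1 - γ) * Rmin ^ 2 / (2 * Rmax ^ 2)
        = Rmin ^ 2 / (2 * Rmax ^ 2) - γ * Rmin ^ 2 / (2 * Rmax ^ 2) := by ring
    linarith
  refine ⟨?_, hkey, hC⟩
  have hpos : 0 < y n * S := lt_of_lt_of_le hC hkey
  rcases hy n with h | h
  · rw [h]; exact Real.sign_of_pos (by rw [h] at hpos; linarith)
  · rw [h]; exact Real.sign_of_neg (by rw [h] at hpos; linarith)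
end

section
/- Under the assumptions of the previous context (R_min ≤ ‖x_n‖ ≤ R_max, |⟨x_n,x_k⟩| ≤ p_max for n≠k, λ_k ∈ (1/(2R_max^2), 3/(2γ^2 R_min^2)), y_k ∈ {±1}, and p_max ≤ γ^3 R_min^4/(3N R_max^2)), for every n we have ⟨x_n, q⟩ ≤ 3R_max^2/(2γ^2 R_min^2) + γ R_min^2/(2R_max^2), where q = ∑_{k=1}^N λ_k y_k x_k. -/
open Real

/-- Upper bound on the correlation of a training sample with the weighted sum
`q = ∑ λ_k y_k x_k`: `⟨x_n, q⟩ ≤ 3R_max²/(2γ²R_min²) + γR_min²/(2R_max²)`. -/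
theorem stmt_11 (d N : ℕ) (hN : 0 < N)
    (x : Fin N → EuclideanSpace ℝ (Fin d)) (lam y : Fin N → ℝ)
    (Rmin Rmax pmax γ : ℝ) (hγ : 0 < γ ∧ γ < 1) (hRmin : 0 < Rmin)
    (hnorm : ∀ n, Rmin ≤ ‖x n‖ ∧ ‖x n‖ ≤ Rmax)
    (hpmax : ∀ n k, n ≠ k → |(inner ℝ (x n) (x k) : ℝ)| ≤ pmax)
    (hy : ∀ n, y n = 1 ∨ y n = -1)
    (hlam : ∀ n, 1 / (2 * Rmax ^ 2) < lam n ∧ lam n < 3 / (2 * γ ^ 2 * Rmin ^ 2))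
    (hcond : pmax ≤ γ ^ 3 * Rmin ^ 4 / (3 * N * Rmax ^ 2)) :
    ∀ n, (inner ℝ (x n) (∑ k, (lam k * y k) • x k) : ℝ) ≤
      3 * Rmax ^ 2 / (2 * γ ^ 2 * Rmin ^ 2) + γ * Rmin ^ 2 / (2 * Rmax ^ 2) := by
  intro n
  obtain ⟨hγ0, hγ1⟩ := hγ
  have hRmax : 0 < Rmax := lt_of_lt_of_le hRmin ((hnorm n).1.trans (hnorm n).2)
  set L := 3 / (2 * γ ^ 2 * Rmin ^ 2) with hL
  have hLpos : 0 < L := by positivity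
  have hip : (inner ℝ (x n) (∑ k, (lam k * y k) • x k) : ℝ)
      = ∑ k, lam k * y k * (inner ℝ (x n) (x k) : ℝ) := by
    rw [inner_sum]
    refine Finset.sum_congr rfl fun k _ => ?_
    rw [real_inner_smul_right]
  rw [hip]
  have hbound : ∀ k, lam k * y k * (inner ℝ (x n) (x k) : ℝ)
      ≤ L * (if k = n then Rmax ^ 2 else pmax) := by
    intro k
    have hlk : 0 < lam k := lt_trans (by positivity) (hlam k).1
    have h1 : lam k * y k * (inner ℝ (x n) (x k) : ℝ) ≤ lam k * |(inner ℝ (x n) (x k) : ℝ)| := by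
      rcases hy k with h | h <;> rw [h] <;>
        nlinarith [le_abs_self ((inner ℝ (x n) (x k) : ℝ)),
          neg_abs_le ((inner ℝ (x n) (x k) : ℝ))]
    refine h1.trans ?_
    by_cases hk : k = n
    · subst hk
      simp only [if_pos rfl, if_true]
      have h0 : (inner ℝ (x k) (x k) : ℝ) = ‖x k‖ ^ 2 := real_inner_self_eq_norm_sq (x k)
      rw [h0, abs_of_nonneg (by positivity)]
      have h2 : ‖x k‖ ^ 2 ≤ Rmax ^ 2 := by nlinarith [(hnorm k).1, (hnorm k).2, hRmin]
      have h3 : lam k < L := (hlam k).2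
      nlinarith [sq_nonneg (‖x k‖), mul_le_mul_of_nonneg_left h2 hlk.le,
        mul_le_mul_of_nonneg_right h3.le (sq_nonneg Rmax)]
    · simp only [if_neg hk]
      have h2 := hpmax n k (fun h => hk h.symm)
      have h3 : lam k < L := (hlam k).2
      nlinarith [abs_nonneg ((inner ℝ (x n) (x k) : ℝ))]
  have hsum : ∑ k, lam k * y k * (inner ℝ (x n) (x k) : ℝ)
      ≤ ∑ k, L * (if k = n then Rmax ^ 2 else pmax) :=
    Finset.sum_le_sum fun k _ => hbound k
  refine hsum.trans ?_
  have hsplit : ∑ k, L * (if k = n then Rmax ^ 2 else pmax)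
      = L * Rmax ^ 2 + (N - 1 : ℝ) * (L * pmax) := by
    rw [← Finset.add_sum_erase _ _ (Finset.mem_univ n)]
    simp only [if_pos rfl, if_true]
    congr 1
    have hcongr : ∀ k ∈ Finset.univ.erase n,
        L * (if k = n then Rmax ^ 2 else pmax) = L * pmax := fun k hk => by
      rw [if_neg (Finset.ne_of_mem_erase hk)]
    rw [Finset.sum_congr rfl hcongr, Finset.sum_const,
      Finset.card_erase_of_mem (Finset.mem_univ n), Finset.card_univ,
      Fintype.card_fin, nsmul_eq_mul]
    congr 1
    push_cast [Nat.cast_sub hN]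
    ring
  rw [hsplit]
  have hfirst : L * Rmax ^ 2 = 3 * Rmax ^ 2 / (2 * γ ^ 2 * Rmin ^ 2) := by
    rw [hL]; ring
  rw [hfirst]
  gcongr
  -- (N-1) * (L * pmax) ≤ γ Rmin² / (2 Rmax²)
  rcases eq_or_lt_of_le (Nat.succ_le_of_lt hN : 1 ≤ N) with h1 | h2
  · -- N = 1
    have hN1 : (N : ℝ) = 1 := by exact_mod_cast h1.symm
    rw [hN1]
    simp
    positivity
  · -- N ≥ 2 : pmax ≥ 0
    have hN2 : 2 ≤ N := h2
    have i0 : Fin N := ⟨0, hN⟩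
    have i1 : Fin N := ⟨1, h2⟩
    have hne : (⟨0, hN⟩ : Fin N) ≠ ⟨1, h2⟩ := by simp [Fin.ext_iff]
    have hp0 : 0 ≤ pmax := (abs_nonneg _).trans (hpmax _ _ hne)
    have hNpos : (0 : ℝ) < N := by exact_mod_cast hN
    have hstep : (N - 1 : ℝ) * (L * pmax) ≤ (N : ℝ) * (L * pmax) := by
      nlinarith
    refine hstep.trans ?_
    have hNne : (N : ℝ) ≠ 0 := ne_of_gt hNpos
    have hkey : (N : ℝ) * (L * (γ ^ 3 * Rmin ^ 4 / (3 * N * Rmax ^ 2)))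
        = γ * Rmin ^ 2 / (2 * Rmax ^ 2) := by
      rw [hL]
      field_simp
    calc (N : ℝ) * (L * pmax) ≤ (N : ℝ) * (L * (γ ^ 3 * Rmin ^ 4 / (3 * N * Rmax ^ 2))) := by
          gcongr
      _ = γ * Rmin ^ 2 / (2 * Rmax ^ 2) := hkey
end

section
/- Let x_1,...,x_N ∈ ℝ^d with R_min ≤ ‖x_n‖ ≤ R_max, |⟨x_n,x_k⟩| ≤ p_max ≤ γ^3 R_min^4/(3N R_max^2) for n ≠ k, weights λ_n ∈ (1/(2R_max^2), 3/(2γ^2 R_min^2)), labels y_n ∈ {±1}, and q = ∑_n λ_n y_n x_n. Then ‖q‖ ≥ R_min √((1−γ)N) / (2R_max^2), and consequently for every n, ⟨x_n, q/‖q‖⟩ ≤ C/√N where C = (3R_max^4 + γ^3 R_min^4)/(γ^2 R_min^3 √(1−γ)). -/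
open Real Finset

/-- Lower bound `‖q‖ ≥ R_min √((1−γ)N)/(2R_max²)` for `q = ∑ λ_n y_n x_n`, and the
resulting bound `⟨x_n, q/‖q‖⟩ ≤ C/√N` with
`C = (3R_max⁴ + γ³R_min⁴)/(γ²R_min³√(1−γ))`. -/
theorem stmt_12 (d N : ℕ) (hN : 0 < N)
    (x : Fin N → EuclideanSpace ℝ (Fin d)) (lam y : Fin N → ℝ)
    (Rmin Rmax pmax γ : ℝ) (hγ : 0 < γ ∧ γ < 1) (hRmin : 0 < Rmin)
    (hnorm : ∀ n, Rmin ≤ ‖x n‖ ∧ ‖x n‖ ≤ Rmax)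
    (hpmax : ∀ n k, n ≠ k → |(inner ℝ (x n) (x k) : ℝ)| ≤ pmax)
    (hy : ∀ n, y n = 1 ∨ y n = -1)
    (hlam : ∀ n, 1 / (2 * Rmax ^ 2) < lam n ∧ lam n < 3 / (2 * γ ^ 2 * Rmin ^ 2))
    (hcond : pmax ≤ γ ^ 3 * Rmin ^ 4 / (3 * N * Rmax ^ 2)) :
    Rmin * Real.sqrt ((1 - γ) * N) / (2 * Rmax ^ 2) ≤ ‖∑ n, (lam n * y n) • x n‖ ∧
    ∀ n, (inner ℝ (x n) (‖∑ k, (lam k * y k) • x k‖⁻¹ • ∑ k, (lam k * y k) • x k) : ℝ) ≤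
      (3 * Rmax ^ 4 + γ ^ 3 * Rmin ^ 4) / (γ ^ 2 * Rmin ^ 3 * Real.sqrt (1 - γ)) /
        Real.sqrt N := by
  obtain ⟨hγ0, hγ1⟩ := hγ
  have n0 : Fin N := ⟨0, hN⟩
  have hRmax : 0 < Rmax := lt_of_lt_of_le hRmin ((hnorm n0).1.trans (hnorm n0).2)
  have hN0 : (0:ℝ) < N := Nat.cast_pos.mpr hN
  have h1γ : 0 < 1 - γ := by linarith
  set q : EuclideanSpace ℝ (Fin d) := ∑ n, (lam n * y n) • x n with hq_def
  have hlam0 : ∀ n, 0 < lam n := fun n => lt_trans (by positivity) (hlam n).1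
  have hyabs : ∀ n, |y n| = 1 := by intro n; rcases hy n with h | h <;> rw [h] <;> norm_num
  have hysq : ∀ n, y n ^ 2 = 1 := by intro n; rcases hy n with h | h <;> rw [h] <;> norm_num
  set P := max pmax 0 with hP_def
  have hP0 : 0 ≤ P := le_max_right _ _
  have hPc : (N:ℝ) * (3 / (2 * γ ^ 2 * Rmin ^ 2) * P) ≤ γ * Rmin ^ 2 / (2 * Rmax ^ 2) := by
    have hPc' : P ≤ γ ^ 3 * Rmin ^ 4 / (3 * N * Rmax ^ 2) :=
      max_le hcond (by positivity)
    have h2 : (N:ℝ) * (3 / (2 * γ ^ 2 * Rmin ^ 2) * P)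
        ≤ (N:ℝ) * (3 / (2 * γ ^ 2 * Rmin ^ 2) * (γ ^ 3 * Rmin ^ 4 / (3 * N * Rmax ^ 2))) := by
      gcongr
    refine h2.trans (le_of_eq ?_)
    field_simp [hγ0.ne', hRmin.ne', hRmax.ne', hN0.ne']
  have hip : ∀ n, (inner ℝ (x n) q : ℝ) = ∑ k, lam k * y k * (inner ℝ (x n) (x k) : ℝ) := by
    intro n
    rw [hq_def, inner_sum]
    exact Finset.sum_congr rfl fun k _ => real_inner_smul_right _ _ _
  have hsplit : ∀ n, (inner ℝ (x n) q : ℝ) =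
      lam n * y n * ‖x n‖ ^ 2 + ∑ k ∈ univ.erase n, lam k * y k * (inner ℝ (x n) (x k) : ℝ) := by
    intro n
    rw [hip n, ← Finset.add_sum_erase _ _ (mem_univ n), real_inner_self_eq_norm_sq]
  have hcross : ∀ n, |∑ k ∈ univ.erase n, lam k * y k * (inner ℝ (x n) (x k) : ℝ)|
      ≤ γ * Rmin ^ 2 / (2 * Rmax ^ 2) := by
    intro n
    refine le_trans (Finset.abs_sum_le_sum_abs _ _) (le_trans ?_ hPc)
    calc ∑ k ∈ univ.erase n, |lam k * y k * (inner ℝ (x n) (x k) : ℝ)|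
        ≤ ∑ _k ∈ univ.erase n, 3 / (2 * γ ^ 2 * Rmin ^ 2) * P := by
          refine Finset.sum_le_sum fun k hk => ?_
          have hnk : n ≠ k := (Finset.ne_of_mem_erase hk).symm
          have h1 : |(inner ℝ (x n) (x k) : ℝ)| ≤ P := (hpmax n k hnk).trans (le_max_left _ _)
          rw [abs_mul, abs_mul, hyabs k, abs_of_pos (hlam0 k), mul_one]
          exact mul_le_mul (hlam k).2.le h1 (abs_nonneg _) (by positivity)
      _ ≤ (N:ℝ) * (3 / (2 * γ ^ 2 * Rmin ^ 2) * P) := by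
          rw [Finset.sum_const, nsmul_eq_mul]
          refine mul_le_mul_of_nonneg_right ?_ (mul_nonneg (by positivity) hP0)
          have hcard : (univ.erase n).card ≤ N :=
            le_trans (Finset.card_le_card (Finset.erase_subset _ _)) (by simp)
          exact_mod_cast hcard
  have hU : ∀ n, (inner ℝ (x n) q : ℝ)
      ≤ 3 / (2 * γ ^ 2 * Rmin ^ 2) * Rmax ^ 2 + γ * Rmin ^ 2 / (2 * Rmax ^ 2) := by
    intro n
    rw [hsplit n]
    have hxn : ‖x n‖ ^ 2 ≤ Rmax ^ 2 := by nlinarith [(hnorm n).2, norm_nonneg (x n)]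
    have h2 : lam n * y n * ‖x n‖ ^ 2 ≤ lam n * ‖x n‖ ^ 2 := by
      have hy1 : y n ≤ 1 := by rcases hy n with h | h <;> rw [h] <;> norm_num
      have h0 : 0 ≤ lam n * ‖x n‖ ^ 2 := mul_nonneg (hlam0 n).le (sq_nonneg _)
      calc lam n * y n * ‖x n‖ ^ 2 = lam n * ‖x n‖ ^ 2 * y n := by ring
        _ ≤ lam n * ‖x n‖ ^ 2 * 1 := mul_le_mul_of_nonneg_left hy1 h0
        _ = lam n * ‖x n‖ ^ 2 := mul_one _
    have h1 : lam n * ‖x n‖ ^ 2 ≤ 3 / (2 * γ ^ 2 * Rmin ^ 2) * Rmax ^ 2 :=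
      mul_le_mul (hlam n).2.le hxn (sq_nonneg _) (by positivity)
    have h3 := (le_abs_self _).trans (hcross n)
    linarith
  have hL : ∀ n, (1 - γ) * Rmin ^ 2 / (2 * Rmax ^ 2) ≤ y n * (inner ℝ (x n) q : ℝ) := by
    intro n
    rw [hsplit n, mul_add]
    have h1 : Rmin ^ 2 / (2 * Rmax ^ 2) ≤ y n * (lam n * y n * ‖x n‖ ^ 2) := by
      have he : y n * (lam n * y n * ‖x n‖ ^ 2) = lam n * ‖x n‖ ^ 2 * y n ^ 2 := by ring
      rw [he, hysq n, mul_one]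
      have hxn : Rmin ^ 2 ≤ ‖x n‖ ^ 2 := by nlinarith [(hnorm n).1, hRmin]
      calc Rmin ^ 2 / (2 * Rmax ^ 2) = 1 / (2 * Rmax ^ 2) * Rmin ^ 2 := by ring
        _ ≤ lam n * ‖x n‖ ^ 2 := mul_le_mul (hlam n).1.le hxn (by positivity) (hlam0 n).le
    have h2 : -(γ * Rmin ^ 2 / (2 * Rmax ^ 2))
        ≤ y n * ∑ k ∈ univ.erase n, lam k * y k * (inner ℝ (x n) (x k) : ℝ) := by
      have h3 := neg_abs_le (y n * ∑ k ∈ univ.erase n, lam k * y k * (inner ℝ (x n) (x k) : ℝ))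
      rw [abs_mul, hyabs n, one_mul] at h3
      have h4 := hcross n
      linarith
    have key : (1 - γ) * Rmin ^ 2 / (2 * Rmax ^ 2)
        = Rmin ^ 2 / (2 * Rmax ^ 2) - γ * Rmin ^ 2 / (2 * Rmax ^ 2) := by ring
    linarith
  have hqq : ‖q‖ ^ 2 = ∑ n, lam n * y n * (inner ℝ (x n) q : ℝ) := by
    rw [← real_inner_self_eq_norm_sq]
    nth_rewrite 1 [hq_def]
    rw [sum_inner]
    exact Finset.sum_congr rfl fun n _ => real_inner_smul_left _ _ _
  have hq2 : (N:ℝ) * ((1 - γ) * Rmin ^ 2) / (4 * Rmax ^ 4) ≤ ‖q‖ ^ 2 := by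
    rw [hqq]
    have h1 : ∀ n ∈ univ, 1 / (2 * Rmax ^ 2) * ((1 - γ) * Rmin ^ 2 / (2 * Rmax ^ 2))
        ≤ lam n * y n * (inner ℝ (x n) q : ℝ) := by
      intro n _
      calc 1 / (2 * Rmax ^ 2) * ((1 - γ) * Rmin ^ 2 / (2 * Rmax ^ 2))
          ≤ lam n * (y n * (inner ℝ (x n) q : ℝ)) :=
            mul_le_mul (hlam n).1.le (hL n) (by positivity) (hlam0 n).le
        _ = lam n * y n * (inner ℝ (x n) q : ℝ) := by ring
    calc (N:ℝ) * ((1 - γ) * Rmin ^ 2) / (4 * Rmax ^ 4)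
        = ∑ _n : Fin N, 1 / (2 * Rmax ^ 2) * ((1 - γ) * Rmin ^ 2 / (2 * Rmax ^ 2)) := by
          rw [Finset.sum_const, Finset.card_univ, Fintype.card_fin, nsmul_eq_mul]
          field_simp [hRmax.ne']
          ring
      _ ≤ ∑ n, lam n * y n * (inner ℝ (x n) q : ℝ) := Finset.sum_le_sum h1
  have hs : 0 < Real.sqrt ((1 - γ) * N) := Real.sqrt_pos.mpr (mul_pos h1γ hN0)
  have hLpos : 0 < Rmin * Real.sqrt ((1 - γ) * N) / (2 * Rmax ^ 2) :=
    div_pos (mul_pos hRmin hs) (by positivity)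
  have hnq : Rmin * Real.sqrt ((1 - γ) * N) / (2 * Rmax ^ 2) ≤ ‖q‖ := by
    refine le_of_pow_le_pow_left₀ two_ne_zero (norm_nonneg q) ?_
    calc (Rmin * Real.sqrt ((1 - γ) * N) / (2 * Rmax ^ 2)) ^ 2
        = (N:ℝ) * ((1 - γ) * Rmin ^ 2) / (4 * Rmax ^ 4) := by
          rw [div_pow, mul_pow, Real.sq_sqrt (mul_nonneg h1γ.le hN0.le)]
          ring
      _ ≤ ‖q‖ ^ 2 := hq2
  refine ⟨hnq, fun n => ?_⟩
  have hqpos : 0 < ‖q‖ := lt_of_lt_of_le hLpos hnq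
  have hU0 : 0 ≤ 3 / (2 * γ ^ 2 * Rmin ^ 2) * Rmax ^ 2 + γ * Rmin ^ 2 / (2 * Rmax ^ 2) := by
    positivity
  rw [real_inner_smul_right]
  calc ‖q‖⁻¹ * (inner ℝ (x n) q : ℝ)
      ≤ ‖q‖⁻¹ * (3 / (2 * γ ^ 2 * Rmin ^ 2) * Rmax ^ 2 + γ * Rmin ^ 2 / (2 * Rmax ^ 2)) :=
        mul_le_mul_of_nonneg_left (hU n) (inv_nonneg.mpr (norm_nonneg q))
    _ = (3 / (2 * γ ^ 2 * Rmin ^ 2) * Rmax ^ 2 + γ * Rmin ^ 2 / (2 * Rmax ^ 2)) / ‖q‖ := by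
        rw [inv_mul_eq_div]
    _ ≤ (3 / (2 * γ ^ 2 * Rmin ^ 2) * Rmax ^ 2 + γ * Rmin ^ 2 / (2 * Rmax ^ 2))
          / (Rmin * Real.sqrt ((1 - γ) * N) / (2 * Rmax ^ 2)) := by
        rw [div_le_div_iff₀ hqpos hLpos]
        exact mul_le_mul_of_nonneg_left hnq hU0
    _ = (3 * Rmax ^ 4 + γ ^ 3 * Rmin ^ 4) / (γ ^ 2 * Rmin ^ 3 * Real.sqrt (1 - γ)) /
          Real.sqrt N := by
        rw [Real.sqrt_mul h1γ.le]
        have hs1 : 0 < Real.sqrt (1 - γ) := Real.sqrt_pos.mpr h1γ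
        have hs2 : 0 < Real.sqrt (N:ℝ) := Real.sqrt_pos.mpr hN0
        field_simp [hγ0.ne', hRmin.ne', hRmax.ne', hs1.ne', hs2.ne']
end
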